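/- The Higman group H = ⟨a₀,a₁,a₂,a₃ | aᵢaᵢ₊₁aᵢ⁻¹ = aᵢ₊₁², mod 4⟩ admits no nontrivial homomorphism to any finite group whose order is a power of a prime p, for any prime p. (More generally it has no nontrivial finite quotients; the p-group case follows since in a finite p-group the relation x y x⁻¹ = y² forces orders to collapse cyclically.) -/

import Mathlib

def HigmanRel (m : ZMod 4 → ℕ) : Set (FreeGroup (ZMod 4)) :=
  {r | ∃ i : ZMod 4, r = FreeGroup.of i * FreeGroup.of (i+1) * (FreeGroup.of i)⁻¹ *
      (FreeGroup.of (i+1) ^ (m i))⁻¹}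

def HigmanLike (m : ZMod 4 → ℕ) : Type := PresentedGroup (HigmanRel m)

instance (m : ZMod 4 → ℕ) : Group (HigmanLike m) := by unfold HigmanLike; infer_instance

def higmanGen (m : ZMod 4 → ℕ) (i : ZMod 4) : HigmanLike m := PresentedGroup.of i

def Higman : Type := HigmanLike (fun _ => 2)

instance : Group Higman := by unfold Higman; infer_instance

def higmanA (i : ZMod 4) : Higman := higmanGen (fun _ => 2) i

lemma higman_rel (i : ZMod 4) :
    higmanA i * higmanA (i+1) * (higmanA i)⁻¹ = (higmanA (i+1))^2 := by
  have h : (PresentedGroup.mk (HigmanRel (fun _ => 2))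
      (FreeGroup.of i * FreeGroup.of (i+1) * (FreeGroup.of i)⁻¹ *
      (FreeGroup.of (i+1) ^ 2)⁻¹) : Higman) = 1 := by
    apply (QuotientGroup.eq_one_iff _).mpr
    exact Subgroup.subset_normalClosure ⟨i, rfl⟩
  have h2 : (higmanA i * higmanA (i+1) * (higmanA i)⁻¹) * ((higmanA (i+1))^2)⁻¹ = 1 := by
    simp [higmanA, higmanGen, PresentedGroup.of] at h ⊢
    exact h
  exact mul_inv_eq_one.mp h2

/-- The Higman group admits no nontrivial homomorphism to any finite group of prime
power order. -/
theorem stmt_14 (p : ℕ) (hp : p.Prime) (G : Type) [Group G] [Fintype G]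
    (n : ℕ) (hG : Fintype.card G = p ^ n) (f : Higman →* G) :
    ∀ x : Higman, f x = 1 := by
  set x : ZMod 4 → G := fun i => f (higmanA i) with hx
  have hconj : ∀ i, x i * x (i+1) * (x i)⁻¹ = (x (i+1))^2 := by
    intro i
    simp only [hx, ← map_mul, ← map_inv, ← map_pow, higman_rel i]
  -- key: each x (i+1) = 1
  have key : ∀ i, x (i+1) = 1 := by
    intro i
    by_contra hne
    set N := orderOf (x i) with hN
    set y := x (i+1) with hy
    -- conjugation iterates: x i ^ k * y * (x i)^(-k) = y ^ (2^k)
    have hiter : ∀ k : ℕ, (x i)^k * y * ((x i)^k)⁻¹ = y ^ (2^k) := by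
      intro k
      induction k with
      | zero => simp
      | succ k ih =>
        have : (x i)^(k+1) * y * ((x i)^(k+1))⁻¹
            = x i * ((x i)^k * y * ((x i)^k)⁻¹) * (x i)⁻¹ := by
          group
        rw [this, ih]
        have : x i * y ^ 2 ^ k * (x i)⁻¹ = (x i * y * (x i)⁻¹) ^ (2^k) := by
          simp [conj_pow]
        rw [this, hconj i, ← pow_mul, pow_succ, mul_comm (2^k) 2]
    have hpowN : y ^ (2^N) = y := by
      have := hiter N
      rw [pow_orderOf_eq_one, one_mul, inv_one, mul_one] at this
      exact this.symm
    have hNpos : 0 < N := orderOf_pos _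
    have h2N : 1 ≤ 2^N := Nat.one_le_two_pow
    have hy1 : y ^ (2^N - 1) = 1 := by
      have : y ^ (2^N - 1) * y = y := by
        rw [← pow_succ, Nat.sub_add_cancel h2N, hpowN]
      exact mul_right_cancel (by rw [this, one_mul])
    have hdvd : orderOf y ∣ 2^N - 1 := orderOf_dvd_of_pow_eq_one hy1
    have hdcard : orderOf y ∣ p ^ n := hG ▸ orderOf_dvd_card
    have hNcard : N ∣ p ^ n := hG ▸ orderOf_dvd_card
    obtain ⟨m, hm, hNm⟩ := (Nat.dvd_prime_pow hp).mp hNcard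
    obtain ⟨k, hk, hdk⟩ := (Nat.dvd_prime_pow hp).mp hdcard
    have hk0 : k ≠ 0 := by
      intro h0
      exact hne (orderOf_eq_one_iff.mp (by rw [hdk, h0, pow_zero]))
    have hpd : p ∣ orderOf y := hdk ▸ dvd_pow_self p hk0
    have hp21 : p ∣ 2^N - 1 := hpd.trans hdvd
    -- cast into ZMod p
    haveI : Fact p.Prime := ⟨hp⟩
    have hcast : ((2:ℕ)^N - 1 : ℕ) = (0 : ZMod p) := by
      exact_mod_cast (ZMod.natCast_eq_zero_iff _ _).mpr hp21
    have h2Np : (2 : ZMod p)^N = 1 := by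
      have h := hcast
      rw [Nat.cast_sub h2N] at h
      push_cast at h
      have := sub_eq_zero.mp h
      simpa using this
    by_cases hp2 : p = 2
    · subst hp2
      have h2d : 2 ∣ 2^N := dvd_pow_self 2 hNpos.ne'
      omega
    · have h2ne : (2 : ZMod p) ≠ 0 := by
        intro h0
        have : (p : ℕ) ∣ 2 := by
          have : ((2:ℕ) : ZMod p) = 0 := by exact_mod_cast h0
          exact (ZMod.natCast_eq_zero_iff _ _).mp this
        exact hp2 ((Nat.prime_dvd_prime_iff_eq hp Nat.prime_two).mp this)
      have ho1 : orderOf (2 : ZMod p) ∣ N := orderOf_dvd_of_pow_eq_one h2Np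
      have ho2 : orderOf (2 : ZMod p) ∣ p - 1 :=
        orderOf_dvd_of_pow_eq_one (ZMod.pow_card_sub_one_eq_one h2ne)
      have hcop : Nat.Coprime N (p - 1) := by
        rw [hNm]
        refine Nat.Coprime.pow_left _ (hp.coprime_iff_not_dvd.mpr ?_)
        intro hdv
        have hple : p ≤ p - 1 := Nat.le_of_dvd (by have := hp.two_le; omega) hdv
        have := hp.two_le
        omega
      have hone : orderOf (2 : ZMod p) = 1 :=
        Nat.eq_one_of_dvd_coprimes hcop ho1 ho2
      have h21 : (2 : ZMod p) = 1 := orderOf_eq_one_iff.mp hone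
      have : (1 : ZMod p) = 0 := by linear_combination h21
      exact one_ne_zero this
  intro z
  have hker : ∀ j : ZMod 4, higmanA j ∈ f.ker := by
    intro j
    have : j = (j - 1) + 1 := by ring
    rw [this]
    exact key (j - 1)
  exact PresentedGroup.generated_by _ f.ker hker z
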